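/- Let $\mu$ be a measure on a measurable space $S$, and let $h, g : S \to [0,\infty)$ be measurable with $h \le g$ pointwise, $0 < Z_g = \int g \, d\mu < \infty$ and $0 < Z_h = \int h \, d\mu < \infty$. Let $X$ have unnormalized density $g$ with respect to $\mu$, let $U$ be uniform on $[0,1]$, and let $Y$ have unnormalized density $h$ with respect to $\mu$, with $X$, $U$, $Y$ mutually independent (with the convention $h(x)/g(x) := 0$ when $g(x) = 0$). Define $W = X$ if $U \le h(X)/g(X)$ and $W = Y$ otherwise. Then $W$ has unnormalized density $h$ with respect to $\mu$, i.e., for every measurable $A$, $\mathbb{P}(W \in A) = (\int_A h \, d\mu)/Z_h$. -/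

import Mathlib

open MeasureTheory ProbabilityTheory

/-- Local correctness of acceptance/rejection: if `X` has unnormalized density `g`,
`U` is uniform on `[0,1]`, `Y` has unnormalized density `h`, with `X`, `U`, `Y`
mutually independent (encoded as `X ⊥ U` and `(X, U) ⊥ Y`), and
`W = X` if `U ≤ h(X)/g(X)` and `W = Y` otherwise, then `W` has unnormalized
density `h` w.r.t. `μ` (with `h(x)/g(x) := 0` when `g(x) = 0`, which is Lean's
convention since `h x = 0` whenever `g x = 0`). -/
theorem ar_locally_correct
    {S : Type*} [MeasurableSpace S] (μ : Measure S)
    (h g : S → ℝ) (hh : Measurable h) (hg : Measurable g)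
    (h_nonneg : ∀ x, 0 ≤ h x) (hle : ∀ x, h x ≤ g x)
    (hgint : Integrable g μ) (hhint : Integrable h μ)
    (hZg : 0 < ∫ x, g x ∂μ) (hZh : 0 < ∫ x, h x ∂μ)
    {Ω : Type*} [MeasurableSpace Ω] (P : Measure Ω) [IsProbabilityMeasure P]
    (X Y : Ω → S) (U : Ω → ℝ)
    (hX : Measurable X) (hY : Measurable Y) (hU : Measurable U)
    (hXlaw : ∀ A : Set S, MeasurableSet A →
      P (X ⁻¹' A) = ENNReal.ofReal ((∫ x in A, g x ∂μ) / ∫ x, g x ∂μ))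
    (hYlaw : ∀ A : Set S, MeasurableSet A →
      P (Y ⁻¹' A) = ENNReal.ofReal ((∫ x in A, h x ∂μ) / ∫ x, h x ∂μ))
    (hUlaw : Measure.map U P = volume.restrict (Set.Icc (0 : ℝ) 1))
    (hindepXU : IndepFun X U P)
    (hindepXUY : IndepFun (fun ω => (X ω, U ω)) Y P)
    (W : Ω → S)
    (hW : ∀ ω, W ω = if U ω ≤ h (X ω) / g (X ω) then X ω else Y ω) :
    ∀ A : Set S, MeasurableSet A →
      P (W ⁻¹' A) = ENNReal.ofReal ((∫ x in A, h x ∂μ) / ∫ x, h x ∂μ) := by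
  intro A hA
  have hg_nonneg : ∀ x, 0 ≤ g x := fun x => (h_nonneg x).trans (hle x)
  set Zg := ∫ x, g x ∂μ with hZgdef
  set Zh := ∫ x, h x ∂μ with hZhdef
  set r : S → ℝ := fun x => h x / g x with hrdef
  have hr : Measurable r := hh.div hg
  have hr_nonneg : ∀ x, 0 ≤ r x := fun x => div_nonneg (h_nonneg x) (hg_nonneg x)
  have hr_le_one : ∀ x, r x ≤ 1 := by
    intro x
    rcases eq_or_lt_of_le (hg_nonneg x) with hgx | hgx
    · simp [hrdef, ← hgx]
    · exact div_le_one_of_le₀ (hle x) (hg_nonneg x)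
  -- law of X as a density measure
  have hmapX : P.map X = (ENNReal.ofReal Zg)⁻¹ •
      μ.withDensity (fun x => ENNReal.ofReal (g x)) := by
    ext B hB
    rw [Measure.map_apply hX hB, hXlaw B hB, Measure.smul_apply, withDensity_apply _ hB,
      ← ofReal_integral_eq_lintegral_ofReal hgint.integrableOn
        (Filter.Eventually.of_forall hg_nonneg),
      ENNReal.ofReal_div_of_pos hZg, smul_eq_mul, div_eq_mul_inv, mul_comm]
  have hjoint : P.map (fun ω => (X ω, U ω)) = (P.map X).prod (P.map U) :=
    (indepFun_iff_map_prod_eq_prod_map_map hX.aemeasurable hU.aemeasurable).mp hindepXU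
  -- measure of Iic under uniform law
  have hIic : ∀ c : ℝ, 0 ≤ c → c ≤ 1 →
      volume.restrict (Set.Icc (0 : ℝ) 1) (Set.Iic c) = ENNReal.ofReal c := by
    intro c h0 h1
    rw [Measure.restrict_apply measurableSet_Iic]
    have : Set.Iic c ∩ Set.Icc (0:ℝ) 1 = Set.Icc 0 c := by
      ext u
      simp only [Set.mem_inter_iff, Set.mem_Iic, Set.mem_Icc]
      constructor
      · rintro ⟨h1', h2, _⟩; exact ⟨h2, h1'⟩
      · rintro ⟨h2, h1'⟩; exact ⟨h1', h2, h1'.trans h1⟩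
    rw [this, Real.volume_Icc, sub_zero]
  -- acceptance set
  set Acc : Set (S × ℝ) := {p | p.2 ≤ r p.1} with hAccdef
  have hAccMeas : MeasurableSet Acc :=
    measurableSet_le measurable_snd (hr.comp measurable_fst)
  have hpair : Measurable (fun ω => (X ω, U ω)) := hX.prodMk hU
  -- key: probability of acceptance with X ∈ B
  have key : ∀ B : Set S, MeasurableSet B →
      P ((fun ω => (X ω, U ω)) ⁻¹' (Prod.fst ⁻¹' B ∩ Acc)) =
        ENNReal.ofReal ((∫ x in B, h x ∂μ) / Zg) := by
    intro B hB
    have hTB : MeasurableSet (Prod.fst ⁻¹' B ∩ Acc) :=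
      (hB.preimage measurable_fst).inter hAccMeas
    rw [← Measure.map_apply hpair hTB, hjoint, Measure.prod_apply hTB]
    have h1 : (∫⁻ x, (P.map U) (Prod.mk x ⁻¹' (Prod.fst ⁻¹' B ∩ Acc)) ∂(P.map X)) =
        ∫⁻ x in B, ENNReal.ofReal (r x) ∂(P.map X) := by
      rw [← lintegral_indicator hB]
      congr 1
      ext x
      by_cases hxB : x ∈ B
      · have hpre : Prod.mk x ⁻¹' (Prod.fst ⁻¹' B ∩ Acc) = Set.Iic (r x) := by
          ext u; simp [hAccdef, hxB]
        rw [hpre, hUlaw, Set.indicator_of_mem hxB]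
        exact hIic (r x) (hr_nonneg x) (hr_le_one x)
      · have hpre : Prod.mk x ⁻¹' (Prod.fst ⁻¹' B ∩ Acc) = ∅ := by
          ext u; simp [hAccdef, hxB]
        rw [hpre, Set.indicator_of_notMem hxB]
        simp
    rw [h1, hmapX]
    rw [Measure.restrict_smul, lintegral_smul_measure, restrict_withDensity hB,
      lintegral_withDensity_eq_lintegral_mul _ (hg.ennreal_ofReal) (hr.ennreal_ofReal)]
    have h2 : ∀ x : S, ENNReal.ofReal (g x) * ENNReal.ofReal (r x) = ENNReal.ofReal (h x) := by
      intro x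
      by_cases hgx : g x = 0
      · have hhx : h x = 0 := le_antisymm (hgx ▸ hle x) (h_nonneg x)
        simp [hgx, hhx]
      · rw [← ENNReal.ofReal_mul (hg_nonneg x), hrdef]
        congr 1
        field_simp
    simp only [Pi.mul_apply, h2]
    rw [← ofReal_integral_eq_lintegral_ofReal hhint.integrableOn
        (Filter.Eventually.of_forall h_nonneg),
      ENNReal.ofReal_div_of_pos hZg, div_eq_mul_inv, mul_comm]
    rw [smul_eq_mul]
  -- probability of acceptance
  have hacc : P ((fun ω => (X ω, U ω)) ⁻¹' Acc) = ENNReal.ofReal (Zh / Zg) := by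
    have := key Set.univ MeasurableSet.univ
    simpa using this
  -- decomposition of W ⁻¹' A
  have hsplit : W ⁻¹' A = ((fun ω => (X ω, U ω)) ⁻¹' (Prod.fst ⁻¹' A ∩ Acc)) ∪
      (((fun ω => (X ω, U ω)) ⁻¹' Accᶜ) ∩ Y ⁻¹' A) := by
    ext ω
    simp only [Set.mem_preimage, Set.mem_union, Set.mem_inter_iff, Set.mem_compl_iff,
      hAccdef, Set.mem_setOf_eq, hW ω]
    by_cases hc : U ω ≤ h (X ω) / g (X ω) <;> simp [hc] <;> grind
  have hdisj : Disjoint ((fun ω => (X ω, U ω)) ⁻¹' (Prod.fst ⁻¹' A ∩ Acc))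
      (((fun ω => (X ω, U ω)) ⁻¹' Accᶜ) ∩ Y ⁻¹' A) := by
    rw [Set.disjoint_left]
    rintro ω ⟨-, hω2⟩ ⟨hω3, -⟩
    exact hω3 hω2
  have hmeas2 : MeasurableSet (((fun ω => (X ω, U ω)) ⁻¹' Accᶜ) ∩ Y ⁻¹' A) :=
    (hpair hAccMeas.compl).inter (hY hA)
  rw [hsplit, measure_union hdisj hmeas2]
  -- second piece via independence
  have hcompl : P ((fun ω => (X ω, U ω)) ⁻¹' Accᶜ) = 1 - ENNReal.ofReal (Zh / Zg) := by
    rw [Set.preimage_compl, measure_compl (hpair hAccMeas) (measure_ne_top P _), hacc,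
      measure_univ]
  have hsecond : P (((fun ω => (X ω, U ω)) ⁻¹' Accᶜ) ∩ Y ⁻¹' A) =
      (1 - ENNReal.ofReal (Zh / Zg)) * ENNReal.ofReal ((∫ x in A, h x ∂μ) / Zh) := by
    rw [hindepXUY.measure_inter_preimage_eq_mul _ _ hAccMeas.compl hA, hcompl, hYlaw A hA]
  rw [key A hA, hsecond]
  -- final arithmetic
  set a := ∫ x in A, h x ∂μ with hadef
  have ha_nonneg : 0 ≤ a := setIntegral_nonneg hA (fun x _ => h_nonneg x)
  have hZhZg : Zh ≤ Zg := integral_mono hhint hgint hle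
  have hZg' : Zg ≠ 0 := ne_of_gt hZg
  have hZh' : Zh ≠ 0 := ne_of_gt hZh
  have hdivnn : 0 ≤ Zh / Zg := div_nonneg hZh.le hZg.le
  have hdivle : Zh / Zg ≤ 1 := div_le_one_of_le₀ hZhZg hZg.le
  rw [← ENNReal.ofReal_one, ← ENNReal.ofReal_sub _ hdivnn,
    ← ENNReal.ofReal_mul (by linarith), ← ENNReal.ofReal_add
      (div_nonneg ha_nonneg hZg.le)
      (mul_nonneg (by linarith) (div_nonneg ha_nonneg hZh.le))]
  congr 1
  field_simp
  ring
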